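/- Let X be a locally compact, non-compact Hausdorff space and let S ⊆ X be closed. Then S ∪ {∞} is a spoke at the point at infinity ∞ in the one-point compactification αX (i.e., ∞ has a neighbourhood base in S ∪ {∞} well-ordered by reverse inclusion) if and only if there exists a chain in the poset of compact subsets of S (ordered by inclusion) that is cofinal. -/

import Mathlib

open Filter Topology Set

universe u v

/-- `x` has a neighbourhood base in the subspace `S` well-ordered by reverse inclusion. -/
def HasWONhdsBase {X : Type u} [TopologicalSpace X] (x : X) (S : Set X) : Prop :=
  ∃ (o : Ordinal.{u}) (B : ↥(Set.Iio o) → Set X),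
    (∀ i, B i ⊆ S) ∧ (∀ i j, i ≤ j → B j ⊆ B i) ∧
    (𝓝[S] x).HasBasis (fun _ => True) B

/-- `X` is radial at `x`. -/
def RadialAt (X : Type u) [TopologicalSpace X] (x : X) : Prop :=
  ∀ A : Set X, x ∈ closure A →
    ∃ (o : Ordinal.{u}) (f : ↥(Set.Iio o) → X), o ≠ 0 ∧
      (∀ i, f i ∈ A) ∧ Filter.Tendsto f Filter.atTop (𝓝 x)

set_option linter.unusedSectionVars false
set_option linter.unusedVariables false
/-- Every nonempty linear order has a cofinal, monotone family indexed by ordinals. -/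
lemma exists_wo_cofinal {α : Type u} [LinearOrder α] :
    ∃ (o : Ordinal.{u}) (f : ↥(Set.Iio o) → α),
      (∀ i j, i ≤ j → f i ≤ f j) ∧ ∀ a, ∃ i, a ≤ f i := by
  classical
  let r : α → α → Prop := WellOrderingRel
  haveI : IsWellOrder α r := WellOrderingRel.isWellOrder
  set D : Set α := {a | ∀ b, r b a → b < a} with hD
  have hcof : ∀ a : α, ∃ d ∈ D, a ≤ d := by
    intro a
    induction a using IsWellFounded.induction r with
    | ind a ih =>
      by_cases ha : a ∈ D
      · exact ⟨a, ha, le_refl a⟩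
      · simp only [hD, Set.mem_setOf_eq, not_forall, not_lt] at ha
        obtain ⟨b, hba, hab⟩ := ha
        obtain ⟨d, hd, hbd⟩ := ih b hba
        exact ⟨d, hd, hab.trans hbd⟩
  have hsub : ∀ a b : ↥D, a < b → r a.1 b.1 := by
    intro a b hab
    rcases trichotomous_of r a.1 b.1 with h | h | h
    · exact h
    · exact absurd (Subtype.ext h) hab.ne
    · exact absurd (a.2 b.1 h) (not_lt_of_gt hab)
  have wf : WellFounded ((· < ·) : ↥D → ↥D → Prop) :=
    Subrelation.wf (fun {a b} h => hsub a b h)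
      (InvImage.wf Subtype.val (IsWellFounded.wf (r := r)))
  haveI : WellFoundedLT ↥D := ⟨wf⟩
  refine ⟨Ordinal.type ((· < ·) : ↥D → ↥D → Prop),
    fun i => (Ordinal.enum (· < ·) ⟨i.1, i.2⟩ : ↥D).1, ?_, ?_⟩
  · intro i j hij
    rcases eq_or_lt_of_le hij with h | h
    · cases h; exact le_rfl
    · exact le_of_lt (Ordinal.enum_lt_enum.mpr h)
  · intro a
    obtain ⟨d, hd, had⟩ := hcof a
    refine ⟨⟨Ordinal.typein ((· < ·) : ↥D → ↥D → Prop) ⟨d, hd⟩, Ordinal.typein_lt_type _ _⟩, ?_⟩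
    simp only [Ordinal.enum_typein]
    exact had

section Helpers

variable {X : Type u} [TopologicalSpace X] [T2Space X] [LocallyCompactSpace X]
  [NoncompactSpace X] {S : Set X}

/-- The basic neighbourhoods of `∞` within `some '' S ∪ {∞}`. -/
def NInf (S K : Set X) : Set (OnePoint X) := OnePoint.some '' (S \ K) ∪ {OnePoint.infty}

lemma NInf_subset (K : Set X) :
    NInf S K ⊆ OnePoint.some '' S ∪ {OnePoint.infty} := by
  rintro z (⟨x, hx, rfl⟩ | hz)
  · exact Or.inl ⟨x, hx.1, rfl⟩
  · exact Or.inr hz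

lemma NInf_mem (hS : IsClosed S) {K : Set X} (hK : IsCompact K) :
    NInf S K ∈ 𝓝[OnePoint.some '' S ∪ {OnePoint.infty}] (OnePoint.infty : OnePoint X) := by
  rw [mem_nhdsWithin_iff_exists_mem_nhds_inter]
  refine ⟨OnePoint.some '' Kᶜ ∪ {OnePoint.infty}, ?_, ?_⟩
  · exact OnePoint.hasBasis_nhds_infty.mem_of_mem ⟨hK.isClosed, hK⟩
  · rintro z ⟨hz1, hz2⟩
    rcases hz2 with ⟨x, hxS, rfl⟩ | hz2
    · rcases hz1 with ⟨y, hy, hxy⟩ | hz1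
      · cases OnePoint.coe_injective hxy
        exact Or.inl ⟨x, ⟨hxS, hy⟩, rfl⟩
      · exact absurd hz1.symm (OnePoint.infty_ne_coe x)
    · exact Or.inr hz2

lemma NInf_of_mem (hS : IsClosed S) {m : Set (OnePoint X)}
    (hm : m ∈ 𝓝[OnePoint.some '' S ∪ {OnePoint.infty}] (OnePoint.infty : OnePoint X)) :
    ∃ K : Set X, IsCompact K ∧ K ⊆ S ∧ NInf S K ⊆ m := by
  rw [mem_nhdsWithin_iff_exists_mem_nhds_inter] at hm
  obtain ⟨u, hu, husub⟩ := hm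
  obtain ⟨L, ⟨hLcl, hLk⟩, hLu⟩ := OnePoint.hasBasis_nhds_infty.mem_iff.mp hu
  refine ⟨L ∩ S, hLk.inter_right hS, inter_subset_right, ?_⟩
  rintro z (⟨x, hx, rfl⟩ | hz)
  · refine husub ⟨hLu (Or.inl ⟨x, fun hxL => hx.2 ⟨hxL, hx.1⟩, rfl⟩), Or.inl ⟨x, hx.1, rfl⟩⟩
  · cases hz
    exact husub ⟨hLu (Or.inr rfl), Or.inr rfl⟩

end Helpers

theorem stmt4 {X : Type u} [TopologicalSpace X] [T2Space X] [LocallyCompactSpace X]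
    [NoncompactSpace X] (S : Set X) (hS : IsClosed S) :
    HasWONhdsBase (OnePoint.infty : OnePoint X)
        (OnePoint.some '' S ∪ {OnePoint.infty}) ↔
      ∃ C : Set (Set X), (∀ K ∈ C, IsCompact K ∧ K ⊆ S) ∧ IsChain (· ⊆ ·) C ∧
        ∀ K : Set X, IsCompact K → K ⊆ S → ∃ L ∈ C, K ⊆ L := by
  constructor
  · rintro ⟨o, B, hBsub, hanti, hbasis⟩
    set g : ↥(Set.Iio o) → Set X := fun i => closure (S \ OnePoint.some ⁻¹' B i) with hg
    have hgKS : ∀ i, IsCompact (g i) ∧ g i ⊆ S := by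
      intro i
      have hBi := hbasis.mem_of_mem (i := i) trivial
      obtain ⟨K, hKc, hKS, hKsub⟩ := NInf_of_mem hS hBi
      have hsub : S \ OnePoint.some ⁻¹' B i ⊆ K := by
        intro x hx
        by_contra hxK
        exact hx.2 (hKsub (Or.inl ⟨x, ⟨hx.1, hxK⟩, rfl⟩))
      have hclo : g i ⊆ K := closure_minimal hsub hKc.isClosed
      exact ⟨hKc.of_isClosed_subset isClosed_closure hclo,
        (closure_minimal (fun x hx => hx.1) hS)⟩
    refine ⟨Set.range g, fun K hK => by obtain ⟨i, rfl⟩ := hK; exact hgKS i, ?_, ?_⟩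
    · rintro _ ⟨i, rfl⟩ _ ⟨j, rfl⟩ _
      rcases le_total i j with h | h
      · exact Or.inl (closure_mono (fun x hx => ⟨hx.1, fun hB => hx.2 (hanti i j h hB)⟩))
      · exact Or.inr (closure_mono (fun x hx => ⟨hx.1, fun hB => hx.2 (hanti j i h hB)⟩))
    · intro K hKc hKS
      obtain ⟨i, -, hi⟩ := hbasis.mem_iff.mp (NInf_mem hS hKc)
      refine ⟨g i, ⟨i, rfl⟩, ?_⟩
      refine subset_closure.trans' ?_
      intro x hx
      refine ⟨hKS hx, fun hB => ?_⟩
      rcases hi hB with ⟨y, hy, hxy⟩ | h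
      · cases OnePoint.coe_injective hxy
        exact hy.2 hx
      · exact (OnePoint.infty_ne_coe x) h.symm
  · rintro ⟨C, hC1, hC2, hC3⟩
    obtain ⟨L₀, hL₀, -⟩ := hC3 ∅ isCompact_empty (empty_subset S)
    letI : LinearOrder ↥C :=
      { (inferInstance : PartialOrder ↥C) with
        le_total := fun a b => hC2.total a.2 b.2
        toDecidableLE := fun _ _ => Classical.dec _ }
    obtain ⟨o, f, hmono, hcofin⟩ := exists_wo_cofinal (α := ↥C)
    refine ⟨o, (fun i => NInf S ((f i : Set X))), (fun i => NInf_subset _), ?_, ?_⟩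
    · intro i j hij
      have hfij : (f i : Set X) ⊆ (f j : Set X) := hmono i j hij
      rintro z (⟨x, hx, rfl⟩ | hz)
      · exact Or.inl ⟨x, ⟨hx.1, fun h => hx.2 (hfij h)⟩, rfl⟩
      · exact Or.inr hz
    · refine ⟨fun t => ⟨fun ht => ?_, fun h => ?_⟩⟩
      · obtain ⟨K, hKc, hKS, hKsub⟩ := NInf_of_mem hS ht
        obtain ⟨L, hLC, hKL⟩ := hC3 K hKc hKS
        obtain ⟨i, hLi⟩ := hcofin ⟨L, hLC⟩
        refine ⟨i, trivial, subset_trans ?_ hKsub⟩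
        rintro z (⟨x, hx, rfl⟩ | hz)
        · exact Or.inl ⟨x, ⟨hx.1, fun h => hx.2 (hLi (hKL h))⟩, rfl⟩
        · exact Or.inr hz
      · obtain ⟨i, -, hi⟩ := h
        exact Filter.mem_of_superset (NInf_mem hS (hC1 _ (f i).2).1) hi
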